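/- For every LF-inducing set Ω, both the two-sided Mahavier dynamical system (I_{F_Ω}, σ_{F_Ω}) and the one-sided Mahavier dynamical system (I^+_{F_Ω}, σ^+_{F_Ω}) are topologically transitive. -/

import Mathlib

open Set Filter Topology

/-- One-sided Mahavier product of a relation `F` on `X`. -/
def MahavierPlus {X : Type*} (F : Set (X × X)) : Set (ℕ → X) :=
  {x | ∀ n : ℕ, (x n, x (n + 1)) ∈ F}

/-- Two-sided Mahavier product of a relation `F` on `X`. -/
def MahavierTwo {X : Type*} (F : Set (X × X)) : Set (ℤ → X) :=
  {x | ∀ n : ℤ, (x n, x (n + 1)) ∈ F}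

/-- The shift map on the one-sided Mahavier product. -/
def shiftPlus {X : Type*} (F : Set (X × X)) (x : MahavierPlus F) : MahavierPlus F :=
  ⟨fun n => (x : ℕ → X) (n + 1), fun n => x.2 (n + 1)⟩

/-- The shift map on the two-sided Mahavier product. -/
def shiftTwo {X : Type*} (F : Set (X × X)) (x : MahavierTwo F) : MahavierTwo F :=
  ⟨fun n => (x : ℤ → X) (n + 1), fun n => x.2 (n + 1)⟩

/-- The metric `D(x,y) = sup_{n ≥ 1} d(x_n, y_n)/2^n` on one-sided sequences
(coordinates are indexed from `0` here, so the weight is `2^(n+1)`). -/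
noncomputable def DPlus {X : Type*} [PseudoMetricSpace X] (x y : ℕ → X) : ℝ :=
  ⨆ n : ℕ, dist (x n) (y n) / 2 ^ (n + 1)

/-- The metric `D(x,y) = sup_{n ∈ ℤ} d(x_n, y_n)/2^{|n|}` on two-sided sequences. -/
noncomputable def DTwo {X : Type*} [PseudoMetricSpace X] (x y : ℤ → X) : ℝ :=
  ⨆ n : ℤ, dist (x n) (y n) / 2 ^ n.natAbs

/-- Topological transitivity. -/
def TopTransitive {Y : Type*} [TopologicalSpace Y] (f : Y → Y) : Prop :=
  ∀ U V : Set Y, IsOpen U → IsOpen V → U.Nonempty → V.Nonempty →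
    ∃ n : ℕ, (f^[n] '' U ∩ V).Nonempty

/-- Topological mixing. -/
def TopMixing {Y : Type*} [TopologicalSpace Y] (f : Y → Y) : Prop :=
  ∀ U V : Set Y, IsOpen U → IsOpen V → U.Nonempty → V.Nonempty →
    ∃ n₀ : ℕ, ∀ n : ℕ, n₀ ≤ n → (f^[n] '' U ∩ V).Nonempty

/-- The shadowing property for a map `f` with respect to a distance `dY`. -/
def ShadowingProp {Y : Type*} (dY : Y → Y → ℝ) (f : Y → Y) : Prop :=
  ∀ ε : ℝ, 0 < ε → ∃ δ : ℝ, 0 < δ ∧ ∀ x : ℕ → Y,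
    (∀ k : ℕ, dY (f (x k)) (x (k + 1)) < δ) →
    ∃ y : Y, ∀ k : ℕ, dY (f^[k] y) (x k) < ε

/-- The specification property for a map `f` with respect to a distance `dY`. -/
def SpecProp {Y : Type*} (dY : Y → Y → ℝ) (f : Y → Y) : Prop :=
  ∀ ε : ℝ, 0 < ε → ∃ N : ℕ, 0 < N ∧ ∀ n : ℕ, 0 < n →
    ∀ x : Fin n → Y, ∀ k l : Fin n → ℕ,
      (∀ i, k i ≤ l i) →
      (∀ i j : Fin n, (i : ℕ) + 1 = (j : ℕ) → l i + N ≤ k j) →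
      ∃ y : Y, ∀ i : Fin n, ∀ m : ℕ, k i ≤ m → m ≤ l i →
        dY (f^[m] y) (f^[m] (x i)) ≤ ε

/-- The CR-specification property for the one-sided Mahavier product of `F`. -/
def CRSpec {X : Type*} [PseudoMetricSpace X] (F : Set (X × X)) : Prop :=
  ∀ ε : ℝ, 0 < ε → ∃ N : ℕ, 0 < N ∧ ∀ n : ℕ, 0 < n →
    ∀ x : Fin n → MahavierPlus F, ∀ k l : Fin n → ℕ,
      (∀ i, k i ≤ l i) →
      (∀ i j : Fin n, (i : ℕ) + 1 = (j : ℕ) → l i + N ≤ k j) →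
      ∃ y : MahavierPlus F, ∀ i : Fin n, ∀ m : ℕ, k i ≤ m → m ≤ l i →
        dist ((x i : ℕ → X) m) ((y : ℕ → X) m) ≤ ε

/-- The image of a set under a relation. -/
def relImage {X : Type*} (F : Set (X × X)) (A : Set X) : Set X :=
  {y | ∃ a ∈ A, (a, y) ∈ F}

/-- Composition of relations. -/
def relComp {X : Type*} (F G : Set (X × X)) : Set (X × X) :=
  {p | ∃ z : X, (p.1, z) ∈ F ∧ (z, p.2) ∈ G}

/-- Iterated composition `F^n` of a relation with itself. -/
def relPow {X : Type*} (F : Set (X × X)) : ℕ → Set (X × X)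
  | 0 => {p | p.1 = p.2}
  | n + 1 => relComp (relPow F n) F

/-- A finite set `Ω` of positive reals is LF-inducing if it has at least two elements,
all its elements are positive, and it contains elements `ω₁ < 1 < ω₂` that never
connect: `ω₁^k = ω₂^l` (for integers `k, l`) only when `k = l = 0`. -/
def LFInducing (Ω : Finset ℝ) : Prop :=
  2 ≤ Ω.card ∧ (∀ ω ∈ Ω, 0 < ω) ∧
  ∃ ω₁ ∈ Ω, ∃ ω₂ ∈ Ω, ω₁ < 1 ∧ 1 < ω₂ ∧
    ∀ k l : ℤ, ω₁ ^ k = ω₂ ^ l → k = 0 ∧ l = 0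

/-- The relation `F_Ω = {(x,y) ∈ [0,1]² : y = ω·x for some ω ∈ Ω}`. -/
def FOmega (Ω : Finset ℝ) : Set (ℝ × ℝ) :=
  {p | p.1 ∈ Set.Icc (0 : ℝ) 1 ∧ p.2 ∈ Set.Icc (0 : ℝ) 1 ∧ ∃ ω ∈ Ω, p.2 = ω * p.1}

lemma log_indep {ω₁ ω₂ : ℝ} (h1 : 0 < ω₁) (h3 : 1 < ω₂)
    (hcon : ∀ k l : ℤ, ω₁ ^ k = ω₂ ^ l → k = 0 ∧ l = 0) :
    ∀ k l : ℤ, (k : ℝ) * Real.log ω₁ = (l : ℝ) * Real.log ω₂ → k = 0 ∧ l = 0 := by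
  intro k l h
  have hp1 : (0:ℝ) < ω₁ ^ k := zpow_pos h1 k
  have hp2 : (0:ℝ) < ω₂ ^ l := zpow_pos (lt_trans one_pos h3) l
  apply hcon
  have : Real.log (ω₁ ^ k) = Real.log (ω₂ ^ l) := by
    rw [Real.log_zpow, Real.log_zpow]; exact h
  exact Real.log_injOn_pos (mem_Ioi.2 hp1) (mem_Ioi.2 hp2) this

lemma small_step {ω₁ ω₂ : ℝ} (h1 : 0 < ω₁) (h2 : ω₁ < 1) (h3 : 1 < ω₂)
    (hcon : ∀ k l : ℤ, ω₁ ^ k = ω₂ ^ l → k = 0 ∧ l = 0) (L : ℝ) (hL : 0 < L) :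
    ∃ a b : ℕ, 0 < (a:ℝ) * Real.log ω₁ + (b:ℝ) * Real.log ω₂ ∧
      (a:ℝ) * Real.log ω₁ + (b:ℝ) * Real.log ω₂ < L := by
  have hind := log_indep h1 h3 hcon
  set lφ := Real.log ω₁ with hlφ
  set θ := Real.log ω₂ with hθ
  have hlφ0 : lφ < 0 := Real.log_neg h1 h2
  have hθ0 : 0 < θ := Real.log_pos h3
  have cast_eq : ∀ k : ℤ, 0 ≤ k → ((k.toNat : ℕ) : ℝ) = (k : ℝ) := by
    intro k hk
    exact_mod_cast congrArg (Int.cast : ℤ → ℝ) (Int.toNat_of_nonneg hk)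
  set S := AddSubgroup.closure ({lφ, θ} : Set ℝ) with hS
  have hmem : ∀ z : ℝ, z ∈ S ↔ ∃ m n : ℤ, (m:ℝ) * lφ + (n:ℝ) * θ = z := by
    intro z
    rw [hS, AddSubgroup.mem_closure_pair]
    simp [zsmul_eq_mul]
  have hdense : Dense (S : Set ℝ) := by
    rcases S.dense_or_cyclic with h | ⟨g, hg⟩
    · exact h
    · exfalso
      have h1m : lφ ∈ S := AddSubgroup.subset_closure (by simp)
      have h2m : θ ∈ S := AddSubgroup.subset_closure (by simp)
      rw [hg, AddSubgroup.mem_closure_singleton] at h1m h2m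
      obtain ⟨p, hp⟩ := h1m
      obtain ⟨q, hq⟩ := h2m
      have heq : (q:ℝ) * lφ = (p:ℝ) * θ := by
        rw [← hp, ← hq]
        push_cast [zsmul_eq_mul]
        ring
      obtain ⟨hq0, hp0⟩ := hind q p heq
      rw [hp0, zero_zsmul] at hp
      exact absurd hp.symm (ne_of_lt hlφ0)
  set ε := min L (min θ (-lφ)) with hε
  have hε0 : 0 < ε := lt_min hL (lt_min hθ0 (by linarith))
  obtain ⟨s, hsS, hs⟩ := hdense.exists_mem_open isOpen_Ioo (nonempty_Ioo.2 hε0)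
  obtain ⟨hs0, hsε⟩ := hs
  obtain ⟨m, n, hmn⟩ := (hmem s).1 hsS
  have hsL : s < L := lt_of_lt_of_le hsε (min_le_left _ _)
  have hsθ : s < θ := lt_of_lt_of_le hsε (le_trans (min_le_right _ _) (min_le_left _ _))
  have hsφ : s < -lφ := lt_of_lt_of_le hsε (le_trans (min_le_right _ _) (min_le_right _ _))
  rcases le_or_gt 0 m with hm | hm
  · rcases le_or_gt 0 n with hn | hn
    · refine ⟨m.toNat, n.toNat, ?_, ?_⟩ <;>
        rw [cast_eq m hm, cast_eq n hn, hmn] <;> assumption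
    · exfalso
      have h1' : (m:ℝ) * lφ ≤ 0 := mul_nonpos_of_nonneg_of_nonpos (by exact_mod_cast hm) hlφ0.le
      have hn' : n ≤ -1 := by omega
      have hn'' : (n:ℝ) ≤ -1 := by exact_mod_cast hn'
      have h2' : (n:ℝ) * θ ≤ -θ := by nlinarith
      linarith [hmn]
  · rcases le_or_gt 0 n with hn | hn
    · exfalso
      have hm' : (m:ℝ) ≤ -1 := by exact_mod_cast (by omega : m ≤ -1)
      have h1' : -lφ ≤ (m:ℝ) * lφ := by nlinarith
      have h2' : (0:ℝ) ≤ (n:ℝ) * θ := mul_nonneg (by exact_mod_cast hn) hθ0.le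
      linarith [hmn]
    · set q := ⌊θ / s⌋ with hqdef
      have hq1 : 1 ≤ q := by
        rw [hqdef, Int.le_floor]
        push_cast
        rw [le_div_iff₀ hs0]
        linarith
      set r := θ - (q:ℝ) * s with hrdef
      have hr1 : 0 ≤ r := by
        have h := Int.floor_le (θ / s)
        rw [← hqdef] at h
        have : (q:ℝ) * s ≤ θ := by
          rw [← le_div_iff₀ hs0]; exact h
        linarith
      have hr2 : r < s := by
        have h := Int.lt_floor_add_one (θ / s)
        rw [← hqdef] at h
        have : θ < ((q:ℝ) + 1) * s := by
          rw [← div_lt_iff₀ hs0]; exact h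
        nlinarith
      have hrform : r = ((-(q*m) : ℤ):ℝ) * lφ + (((1 - q*n) : ℤ):ℝ) * θ := by
        rw [hrdef, ← hmn]; push_cast; ring
      have hrne : r ≠ 0 := by
        intro h0
        have heq : ((-(q*m) : ℤ):ℝ) * lφ = ((-(1-q*n) : ℤ):ℝ) * θ := by
          push_cast at hrform ⊢
          linarith [hrform, h0]
        obtain ⟨hA, _⟩ := hind _ _ heq
        have : q * m < 0 := mul_neg_of_pos_of_neg (by omega) hm
        omega
      have h1z : (0:ℤ) ≤ -(q*m) := by nlinarith
      have h2z : (0:ℤ) ≤ 1 - q*n := by nlinarith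
      refine ⟨(-(q*m)).toNat, ((1 - q*n)).toNat, ?_, ?_⟩ <;>
        rw [cast_eq _ h1z, cast_eq _ h2z, ← hrform]
      · exact lt_of_le_of_ne hr1 (Ne.symm hrne)
      · linarith


lemma exists_ratio {ω₁ ω₂ : ℝ} (h1 : 0 < ω₁) (h2 : ω₁ < 1) (h3 : 1 < ω₂)
    (hstep : ∀ L : ℝ, 0 < L → ∃ a b : ℕ, 0 < (a:ℝ) * Real.log ω₁ + (b:ℝ) * Real.log ω₂ ∧
      (a:ℝ) * Real.log ω₁ + (b:ℝ) * Real.log ω₂ < L)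
    (C : ℝ) (hC : 1 < C) :
    ∃ a b : ℕ, 1 < ω₁ ^ a * ω₂ ^ b ∧ ω₁ ^ a * ω₂ ^ b < C := by
  obtain ⟨a, b, hpos, hlt⟩ := hstep (Real.log C) (Real.log_pos hC)
  refine ⟨a, b, ?_, ?_⟩
  · have hx : (0:ℝ) < ω₁ ^ a * ω₂ ^ b :=
      mul_pos (pow_pos h1 a) (pow_pos (lt_trans one_pos h3) b)
    have : 0 < Real.log (ω₁ ^ a * ω₂ ^ b) := by
      rw [Real.log_mul (ne_of_gt (pow_pos h1 a)) (ne_of_gt (pow_pos (lt_trans one_pos h3) b)),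
        Real.log_pow, Real.log_pow]
      exact hpos
    exact (Real.log_pos_iff hx.le).1 this
  · have hx : (0:ℝ) < ω₁ ^ a * ω₂ ^ b :=
      mul_pos (pow_pos h1 a) (pow_pos (lt_trans one_pos h3) b)
    have : Real.log (ω₁ ^ a * ω₂ ^ b) < Real.log C := by
      rw [Real.log_mul (ne_of_gt (pow_pos h1 a)) (ne_of_gt (pow_pos (lt_trans one_pos h3) b)),
        Real.log_pow, Real.log_pow]
      exact hlt
    exact (Real.log_lt_log_iff hx (lt_trans one_pos hC)).1 this


def ReachF (Ω : Finset ℝ) : ℝ → ℝ → Prop :=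
  Relation.ReflTransGen (fun x y => (x, y) ∈ FOmega Ω)

lemma reach_pow {Ω : Finset ℝ} {ω : ℝ} (hω : ω ∈ Ω) (x : ℝ) (k : ℕ)
    (h : ∀ i ≤ k, ω ^ i * x ∈ Icc (0:ℝ) 1) : ReachF Ω x (ω ^ k * x) := by
  induction k with
  | zero => rw [pow_zero, one_mul]; exact Relation.ReflTransGen.refl
  | succ k ih =>
    refine Relation.ReflTransGen.tail (ih fun i hi => h i (le_trans hi (Nat.le_succ k))) ?_
    refine ⟨h k (Nat.le_succ k), h (k+1) le_rfl, ω, hω, ?_⟩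
    rw [pow_succ]; ring

lemma reach_pow_le {Ω : Finset ℝ} {ω : ℝ} (hω : ω ∈ Ω) (h0 : 0 < ω) (h1 : ω ≤ 1)
    {x : ℝ} (hx : x ∈ Icc (0:ℝ) 1) (k : ℕ) : ReachF Ω x (ω ^ k * x) := by
  refine reach_pow hω x k fun i _ => ⟨mul_nonneg (pow_nonneg h0.le i) hx.1, ?_⟩
  calc ω ^ i * x ≤ 1 * 1 := by
        apply mul_le_mul (pow_le_one₀ h0.le h1) hx.2 hx.1 zero_le_one
    _ = 1 := by ring

lemma reach_pow_ge {Ω : Finset ℝ} {ω : ℝ} (hω : ω ∈ Ω) (h1 : 1 ≤ ω)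
    {x : ℝ} (hx : 0 ≤ x) (k : ℕ) (hk : ω ^ k * x ≤ 1) : ReachF Ω x (ω ^ k * x) := by
  refine reach_pow hω x k fun i hi => ⟨mul_nonneg (pow_nonneg (by linarith) i) hx, ?_⟩
  calc ω ^ i * x ≤ ω ^ k * x := by
        apply mul_le_mul_of_nonneg_right (pow_le_pow_right₀ h1 hi) hx
    _ ≤ 1 := hk

lemma reach_main {Ω : Finset ℝ} {ω₁ ω₂ : ℝ} (hω₁ : ω₁ ∈ Ω) (hω₂ : ω₂ ∈ Ω)
    (h1 : 0 < ω₁) (h2 : ω₁ < 1) (h3 : 1 < ω₂)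
    (hratio : ∀ C : ℝ, 1 < C → ∃ a b : ℕ, 1 < ω₁ ^ a * ω₂ ^ b ∧ ω₁ ^ a * ω₂ ^ b < C)
    {x u v : ℝ} (hx0 : 0 < x) (hx1 : x ≤ 1) (hu : 0 < u) (huv : u < v) (hv : v ≤ 1) :
    ∃ t, u < t ∧ t ≤ v ∧ ReachF Ω x t := by
  obtain ⟨a, b, hρ1, hρ2⟩ := hratio (v / u) ((one_lt_div hu).2 huv)
  set ρ := ω₁ ^ a * ω₂ ^ b with hρ
  obtain ⟨A, hA⟩ := exists_pow_lt_of_lt_one hu h2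
  set x₀ := ω₁ ^ A * x with hx₀
  have hx₀0 : 0 < x₀ := mul_pos (pow_pos h1 A) hx0
  have hx₀u : x₀ < u := by
    calc x₀ ≤ ω₁ ^ A * 1 := mul_le_mul_of_nonneg_left hx1 (pow_pos h1 A).le
      _ = ω₁ ^ A := by ring
      _ < u := hA
  have hex : ∃ j : ℕ, u < ρ ^ j * x₀ := by
    obtain ⟨j, hj⟩ := pow_unbounded_of_one_lt (u / x₀) hρ1
    exact ⟨j, by rwa [div_lt_iff₀ hx₀0] at hj⟩
  set n := Nat.find hex with hn
  have hnu : u < ρ ^ n * x₀ := Nat.find_spec hex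
  have hbound : ∀ j ≤ n, ρ ^ j * x₀ ≤ v := by
    intro j hj
    rcases eq_or_lt_of_le hj with rfl | hjn
    · -- j = n : use minimality at n-1
      have hn0 : n ≠ 0 := by
        intro h0
        rw [h0] at hnu
        simp at hnu
        linarith
      have hmin : ¬ u < ρ ^ (n-1) * x₀ := Nat.find_min hex (by omega)
      push_neg at hmin
      have hpow : ρ ^ n * x₀ = ρ * (ρ ^ (n-1) * x₀) := by
        conv_lhs => rw [show n = (n-1)+1 by omega]
        rw [pow_succ']
        ring
      rw [hpow]
      have hc : ρ * (ρ ^ (n-1) * x₀) < v :=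
        calc ρ * (ρ ^ (n-1) * x₀) ≤ ρ * u :=
              mul_le_mul_of_nonneg_left hmin (by linarith)
          _ < (v / u) * u := mul_lt_mul_of_pos_right hρ2 hu
          _ = v := by field_simp
      exact hc.le
    · have := Nat.find_min hex hjn
      push_neg at this
      linarith
  have hρ0 : 0 < ρ := by linarith
  have climb : ∀ j ≤ n, ReachF Ω x (ρ ^ j * x₀) := by
    intro j hj
    induction j with
    | zero => simpa using reach_pow_le hω₁ h1 h2.le ⟨hx0.le, hx1⟩ A
    | succ j ih =>
      refine Relation.ReflTransGen.trans (ih (by omega)) ?_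
      set s := ρ ^ j * x₀ with hs
      have hs0 : 0 < s := mul_pos (pow_pos hρ0 j) hx₀0
      have hs1 : s ≤ 1 := le_trans (hbound j (by omega)) hv
      have step1 : ReachF Ω s (ω₁ ^ a * s) := reach_pow_le hω₁ h1 h2.le ⟨hs0.le, hs1⟩ a
      have hend : ω₂ ^ b * (ω₁ ^ a * s) = ρ ^ (j+1) * x₀ := by
        rw [hs, hρ, pow_succ]; ring
      have step2 : ReachF Ω (ω₁ ^ a * s) (ω₂ ^ b * (ω₁ ^ a * s)) := by
        apply reach_pow_ge hω₂ h3.le (mul_nonneg (pow_nonneg h1.le a) hs0.le) b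
        rw [hend]
        exact le_trans (hbound (j+1) hj) hv
      rw [← hend]
      exact Relation.ReflTransGen.trans step1 step2
  exact ⟨ρ ^ n * x₀, hnu, hbound n le_rfl, climb n le_rfl⟩

lemma reach_chain {Ω : Finset ℝ} {x y : ℝ} (h : ReachF Ω x y) :
    ∃ m : ℕ, ∃ w : ℕ → ℝ, w 0 = x ∧ w m = y ∧ ∀ i < m, (w i, w (i+1)) ∈ FOmega Ω := by
  induction h with
  | refl => exact ⟨0, fun _ => x, rfl, rfl, by omega⟩
  | @tail b c _ hbc ih =>
    obtain ⟨m, w, hw0, hwm, hstep⟩ := ih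
    refine ⟨m + 1, fun i => if i ≤ m then w i else c, by simp [hw0], by simp, ?_⟩
    intro i hi
    rcases lt_or_eq_of_le (Nat.lt_succ_iff.1 hi) with hlt | rfl
    · simp only [if_pos (le_of_lt hlt), if_pos (Nat.succ_le_of_lt hlt)]
      exact hstep i hlt
    · simp only [le_refl, if_pos, if_neg (by omega : ¬ i + 1 ≤ i)]
      rw [hwm]
      exact hbc


lemma open_ball_gen {ι : Type*} (ν : ι → ℕ) {S : Set (ι → ℝ)} {U : Set S} (hU : IsOpen U)
    {x : S} (hx : x ∈ U) :
    ∃ N : ℕ, ∃ ε : ℝ, 0 < ε ∧ ∀ z : S,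
      (∀ i : ι, ν i ≤ N → |(z : ι → ℝ) i - (x : ι → ℝ) i| < ε) → z ∈ U := by
  obtain ⟨W, hWo, hWU⟩ := isOpen_induced_iff.1 hU
  have hxW : (x : ι → ℝ) ∈ W := by rw [← hWU] at hx; exact hx
  obtain ⟨I, u, hu, hsub⟩ := isOpen_pi_iff.1 hWo _ hxW
  have hball : ∀ i ∈ I, ∃ δ : ℝ, 0 < δ ∧ Metric.ball ((x : ι → ℝ) i) δ ⊆ u i := by
    intro i hi
    obtain ⟨δ, hδ, hb⟩ := Metric.isOpen_iff.1 (hu i hi).1 _ (hu i hi).2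
    exact ⟨δ, hδ, hb⟩
  choose! δ hδ hb using hball
  refine ⟨I.sup ν, if h : I.Nonempty then I.inf' h δ else 1, ?_, ?_⟩
  · split_ifs with h
    · exact (Finset.lt_inf'_iff h).2 fun i hi => hδ i hi
    · exact one_pos
  · intro z hz
    rw [← hWU]
    refine hsub ?_
    intro i hi
    apply hb i hi
    rw [Metric.mem_ball, Real.dist_eq]
    have h1 := hz i (Finset.le_sup (f := ν) hi)
    have h2 : (if h : I.Nonempty then I.inf' h δ else 1) ≤ δ i := by
      rw [dif_pos ⟨i, hi⟩]
      exact Finset.inf'_le _ hi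
    linarith
lemma shiftPlus_iterate {X : Type*} (F : Set (X × X)) (n : ℕ) (z : MahavierPlus F) (i : ℕ) :
    (((shiftPlus F)^[n]) z : ℕ → X) i = (z : ℕ → X) (i + n) := by
  induction n generalizing z with
  | zero => rfl
  | succ n ih =>
    rw [Function.iterate_succ_apply]
    rw [ih (shiftPlus F z)]
    show (z : ℕ → X) (i + n + 1) = _
    congr 1
lemma shiftTwo_iterate {X : Type*} (F : Set (X × X)) (n : ℕ) (z : MahavierTwo F) (i : ℤ) :
    (((shiftTwo F)^[n]) z : ℤ → X) i = (z : ℤ → X) (i + n) := by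
  induction n generalizing z with
  | zero => simp
  | succ n ih =>
    rw [Function.iterate_succ_apply]
    rw [ih (shiftTwo F z)]
    show (z : ℤ → X) (i + n + 1) = _
    have h : i + (n:ℤ) + 1 = i + ((n:ℕ)+1 : ℕ) := by push_cast; ring
    rw [h]


section helpers
variable {Ω : Finset ℝ}

lemma mem_Icc_plus {x : ℕ → ℝ} (hx : x ∈ MahavierPlus (FOmega Ω)) (i : ℕ) :
    x i ∈ Icc (0:ℝ) 1 := (hx i).1

lemma mem_Icc_two {x : ℤ → ℝ} (hx : x ∈ MahavierTwo (FOmega Ω)) (i : ℤ) :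
    x i ∈ Icc (0:ℝ) 1 := (hx i).1

lemma zero_fwd_plus (hpos : ∀ ω ∈ Ω, 0 < ω) {x : ℕ → ℝ}
    (hx : x ∈ MahavierPlus (FOmega Ω)) {i : ℕ} (hi : x i = 0) :
    ∀ j, i ≤ j → x j = 0 := by
  intro j hj
  induction j with
  | zero =>
    have h0 : i = 0 := Nat.le_zero.1 hj
    rw [← h0]; exact hi
  | succ j ih =>
    rcases Nat.lt_or_ge i (j+1) with h | h
    · have hij : i ≤ j := by omega
      obtain ⟨_, _, ω, hω, heq⟩ := hx j
      have heq' : x (j+1) = ω * x j := heq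
      rw [heq', ih hij, mul_zero]
    · have : i = j + 1 := by omega
      rw [← this]; exact hi

lemma zero_back_plus (hpos : ∀ ω ∈ Ω, 0 < ω) {x : ℕ → ℝ}
    (hx : x ∈ MahavierPlus (FOmega Ω)) {N : ℕ} (hN : x N = 0) :
    ∀ i, i ≤ N → x i = 0 := by
  have step : ∀ i, x (i+1) = 0 → x i = 0 := by
    intro i h
    obtain ⟨_, _, ω, hω, heq⟩ := hx i
    have heq' : x (i+1) = ω * x i := heq
    rw [h] at heq'
    rcases mul_eq_zero.1 heq'.symm with h' | h'
    · exact absurd h' (ne_of_gt (hpos ω hω))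
    · exact h'
  have key : ∀ j, x (N - j) = 0 := by
    intro j
    induction j with
    | zero => simpa using hN
    | succ j ih =>
      rcases Nat.lt_or_ge j N with h | h
      · apply step
        have : N - j = N - (j+1) + 1 := by omega
        rwa [this] at ih
      · have : N - (j+1) = N - j := by omega
        rwa [this]
  intro i hi
  have := key (N - i)
  rwa [show N - (N - i) = i by omega] at this

lemma zero_back_two (hpos : ∀ ω ∈ Ω, 0 < ω) {x : ℤ → ℝ}
    (hx : x ∈ MahavierTwo (FOmega Ω)) {N : ℤ} (hN : x N = 0) :
    ∀ i : ℤ, i ≤ N → x i = 0 := by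
  have step : ∀ i : ℤ, x (i+1) = 0 → x i = 0 := by
    intro i h
    obtain ⟨_, _, ω, hω, heq⟩ := hx i
    have heq' : x (i+1) = ω * x i := heq
    rw [h] at heq'
    rcases mul_eq_zero.1 heq'.symm with h' | h'
    · exact absurd h' (ne_of_gt (hpos ω hω))
    · exact h'
  have key : ∀ j : ℕ, x (N - j) = 0 := by
    intro j
    induction j with
    | zero => simpa using hN
    | succ j ih =>
      apply step
      have : N - (j+1 : ℕ) + 1 = N - j := by push_cast; ring
      rwa [this]
  intro i hi
  have := key (N - i).toNat
  rwa [show N - ((N - i).toNat : ℤ) = i by omega] at this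

lemma zero_fwd_two (hpos : ∀ ω ∈ Ω, 0 < ω) {x : ℤ → ℝ}
    (hx : x ∈ MahavierTwo (FOmega Ω)) {i : ℤ} (hi : x i = 0) :
    ∀ j : ℤ, i ≤ j → x j = 0 := by
  have step : ∀ k : ℤ, x k = 0 → x (k+1) = 0 := by
    intro k h
    obtain ⟨_, _, ω, hω, heq⟩ := hx k
    have heq' : x (k+1) = ω * x k := heq
    rw [heq', h, mul_zero]
  have key : ∀ j : ℕ, x (i + j) = 0 := by
    intro j
    induction j with
    | zero => simpa using hi
    | succ j ih =>
      have : i + (j+1 : ℕ) = (i + j) + 1 := by push_cast; ring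
      rw [this]
      exact step _ ih
  intro j hj
  have := key (j - i).toNat
  rwa [show i + ((j - i).toNat : ℤ) = j by omega] at this

lemma scale_plus {c : ℝ} (hc0 : 0 ≤ c) (hc1 : c ≤ 1) {y : ℕ → ℝ}
    (hy : y ∈ MahavierPlus (FOmega Ω)) :
    (fun j => c * y j) ∈ MahavierPlus (FOmega Ω) := by
  intro j
  obtain ⟨h1, h2, ω, hω, heq⟩ := hy j
  have heq' : y (j+1) = ω * y j := heq
  refine ⟨⟨mul_nonneg hc0 h1.1, ?_⟩, ⟨mul_nonneg hc0 h2.1, ?_⟩, ω, hω, by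
    show c * y (j+1) = ω * (c * y j)
    rw [heq']; ring⟩
  · calc c * y j ≤ 1 * 1 := mul_le_mul hc1 h1.2 h1.1 zero_le_one
      _ = 1 := by ring
  · calc c * y (j+1) ≤ 1 * 1 := mul_le_mul hc1 h2.2 h2.1 zero_le_one
      _ = 1 := by ring

lemma pt_plus {ω₁ : ℝ} (hω₁ : ω₁ ∈ Ω) (h1 : 0 < ω₁) (h2 : ω₁ < 1)
    {t : ℝ} (ht0 : 0 ≤ t) (ht1 : t ≤ 1) :
    (fun i => t * ω₁ ^ i) ∈ MahavierPlus (FOmega Ω) := by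
  intro i
  have hval : ∀ k : ℕ, t * ω₁ ^ k ∈ Icc (0:ℝ) 1 := by
    intro k
    constructor
    · exact mul_nonneg ht0 (pow_nonneg h1.le k)
    · calc t * ω₁ ^ k ≤ 1 * 1 := mul_le_mul ht1 (pow_le_one₀ h1.le h2.le) (pow_nonneg h1.le k) zero_le_one
        _ = 1 := by ring
  exact ⟨hval i, hval (i+1), ω₁, hω₁, by
    show t * ω₁ ^ (i+1) = ω₁ * (t * ω₁ ^ i)
    rw [pow_succ]; ring⟩

lemma glue_plus {x : ℕ → ℝ} (hx : x ∈ MahavierPlus (FOmega Ω)) (N m : ℕ)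
    (w : ℕ → ℝ) (hw0 : w 0 = x N) (hsteps : ∀ i < m, (w i, w (i+1)) ∈ FOmega Ω)
    {tail : ℕ → ℝ} (htail : tail ∈ MahavierPlus (FOmega Ω)) (hwm : w m = tail 0) :
    ∃ z ∈ MahavierPlus (FOmega Ω), (∀ i, i ≤ N → z i = x i) ∧ (∀ j : ℕ, z (N + m + j) = tail j) := by
  set z : ℕ → ℝ := fun i => if i ≤ N then x i else if i ≤ N + m then w (i - N) else tail (i - (N+m)) with hz
  have f1 : ∀ i, i ≤ N → z i = x i := fun i hi => by simp [hz, hi]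
  have f2 : ∀ j, j ≤ m → z (N + j) = w j := by
    intro j hj
    rcases Nat.eq_zero_or_pos j with rfl | hj0
    · simpa [hz] using hw0.symm
    · have h1 : ¬ (N + j ≤ N) := by omega
      have h2 : N + j ≤ N + m := by omega
      simp only [hz, if_neg h1, if_pos h2]
      congr 1
      omega
  have f3 : ∀ j : ℕ, z (N + m + j) = tail j := by
    intro j
    rcases Nat.eq_zero_or_pos j with rfl | hj0
    · rw [show N + m + 0 = N + m by ring, f2 m le_rfl, hwm]
    · have h1 : ¬ (N + m + j ≤ N) := by omega
      have h2 : ¬ (N + m + j ≤ N + m) := by omega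
      simp only [hz, if_neg h1, if_neg h2]
      congr 1
      omega
  refine ⟨z, ?_, f1, f3⟩
  intro i
  rcases Nat.lt_or_ge i N with hi | hi
  · rw [f1 i hi.le, f1 (i+1) hi]
    exact hx i
  · rcases Nat.lt_or_ge i (N + m) with hi2 | hi2
    · have e1 : z i = w (i - N) := by
        rw [show i = N + (i - N) by omega]
        rw [f2 _ (by omega)]
        congr 1
        omega
      have e2 : z (i+1) = w (i - N + 1) := by
        rw [show i + 1 = N + (i - N + 1) by omega]
        rw [f2 _ (by omega)]
      rw [e1, e2]
      exact hsteps (i - N) (by omega)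
    · have e1 : z i = tail (i - (N + m)) := by
        rw [show i = N + m + (i - (N + m)) by omega, f3]
        congr 1
        omega
      have e2 : z (i+1) = tail (i - (N + m) + 1) := by
        rw [show i + 1 = N + m + (i - (N + m) + 1) by omega, f3]
      rw [e1, e2]
      exact htail (i - (N + m))
end helpers


section helpers2
variable {Ω : Finset ℝ}

lemma glue_two {x : ℤ → ℝ} (hx : x ∈ MahavierTwo (FOmega Ω)) (N m : ℕ)
    (w : ℕ → ℝ) (hw0 : w 0 = x N) (hsteps : ∀ i < m, (w i, w (i+1)) ∈ FOmega Ω)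
    {tail : ℤ → ℝ} (htail : ∀ i : ℤ, (N:ℤ) + m ≤ i → (tail i, tail (i+1)) ∈ FOmega Ω)
    (hwm : w m = tail ((N:ℤ) + m)) :
    ∃ z ∈ MahavierTwo (FOmega Ω), (∀ i : ℤ, i ≤ N → z i = x i) ∧
      (∀ i : ℤ, (N:ℤ) + m ≤ i → z i = tail i) := by
  set z : ℤ → ℝ := fun i => if i ≤ (N:ℤ) then x i else if i ≤ (N:ℤ) + m then w (i - N).toNat
    else tail i with hz
  have f1 : ∀ i : ℤ, i ≤ N → z i = x i := fun i hi => by simp [hz, hi]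
  have f2 : ∀ j : ℕ, j ≤ m → z ((N:ℤ) + j) = w j := by
    intro j hj
    rcases Nat.eq_zero_or_pos j with rfl | hj0
    · simpa [hz] using hw0.symm
    · have h1 : ¬ ((N:ℤ) + j ≤ N) := by omega
      have h2 : (N:ℤ) + j ≤ (N:ℤ) + m := by omega
      simp only [hz, if_neg h1, if_pos h2]
      congr 1
      omega
  have f3 : ∀ i : ℤ, (N:ℤ) + m ≤ i → z i = tail i := by
    intro i hi
    rcases eq_or_lt_of_le hi with heq | hlt
    · rw [← heq]
      rw [show ((N:ℤ) + m) = ((N:ℤ) + (m:ℕ)) by push_cast; ring, f2 m le_rfl, hwm]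
    · have h1 : ¬ (i ≤ (N:ℤ)) := by omega
      have h2 : ¬ (i ≤ (N:ℤ) + m) := by omega
      simp only [hz, if_neg h1, if_neg h2]
  refine ⟨z, ?_, f1, f3⟩
  intro i
  rcases lt_or_ge i (N:ℤ) with hi | hi
  · rw [f1 i hi.le, f1 (i+1) (by omega)]
    exact hx i
  · rcases lt_or_ge i ((N:ℤ) + m) with hi2 | hi2
    · have e1 : z i = w (i - N).toNat := by
        rw [show i = (N:ℤ) + ((i - N).toNat : ℕ) by omega, f2 _ (by omega)]
        congr 1
        omega
      have e2 : z (i+1) = w ((i - N).toNat + 1) := by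
        rw [show i + 1 = (N:ℤ) + (((i - N).toNat + 1 : ℕ) : ℕ) by push_cast; omega,
          f2 _ (by omega)]
      rw [e1, e2]
      exact hsteps (i - N).toNat (by omega)
    · rw [f3 i hi2, f3 (i+1) (by omega)]
      exact htail i hi2

lemma tail_pow_two {ω₁ : ℝ} (hω₁ : ω₁ ∈ Ω) (h1 : 0 < ω₁) (h2 : ω₁ < 1)
    {t : ℝ} (ht0 : 0 ≤ t) (ht1 : t ≤ 1) (N : ℤ) :
    ∀ i : ℤ, N ≤ i →
      ((fun i : ℤ => t * ω₁ ^ (i - N).toNat) i,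
       (fun i : ℤ => t * ω₁ ^ (i - N).toNat) (i+1)) ∈ FOmega Ω := by
  intro i hi
  have hval : ∀ k : ℕ, t * ω₁ ^ k ∈ Icc (0:ℝ) 1 := by
    intro k
    refine ⟨mul_nonneg ht0 (pow_nonneg h1.le k), ?_⟩
    calc t * ω₁ ^ k ≤ 1 * 1 :=
          mul_le_mul ht1 (pow_le_one₀ h1.le h2.le) (pow_nonneg h1.le k) zero_le_one
      _ = 1 := by ring
  refine ⟨hval _, hval _, ω₁, hω₁, ?_⟩
  show t * ω₁ ^ (i + 1 - N).toNat = ω₁ * (t * ω₁ ^ (i - N).toNat)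
  rw [show (i + 1 - N).toNat = (i - N).toNat + 1 by omega, pow_succ]
  ring

lemma scale_shift_two {c : ℝ} (hc0 : 0 ≤ c) (hc1 : c ≤ 1) {y : ℤ → ℝ}
    (hy : y ∈ MahavierTwo (FOmega Ω)) (n : ℤ) :
    (fun i : ℤ => c * y (i - n)) ∈ MahavierTwo (FOmega Ω) := by
  intro i
  obtain ⟨hA, hB, ω, hω, heq⟩ := hy (i - n)
  have heq' : y (i - n + 1) = ω * y (i - n) := heq
  have e : i + 1 - n = i - n + 1 := by ring
  refine ⟨⟨mul_nonneg hc0 hA.1, ?_⟩, ⟨?_, ?_⟩, ω, hω, ?_⟩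
  · calc c * y (i - n) ≤ 1 * 1 := mul_le_mul hc1 hA.2 hA.1 zero_le_one
      _ = 1 := by ring
  · show 0 ≤ c * y (i + 1 - n)
    rw [e]
    exact mul_nonneg hc0 hB.1
  · show c * y (i + 1 - n) ≤ 1
    rw [e]
    calc c * y (i - n + 1) ≤ 1 * 1 := mul_le_mul hc1 hB.2 hB.1 zero_le_one
      _ = 1 := by ring
  · show c * y (i + 1 - n) = ω * (c * y (i - n))
    rw [e, heq']
    ring

lemma qt_two {ω₁ ω₂ : ℝ} (hω₁ : ω₁ ∈ Ω) (hω₂ : ω₂ ∈ Ω) (h1 : 0 < ω₁) (h2 : ω₁ < 1)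
    (h3 : 1 < ω₂) {t : ℝ} (ht0 : 0 < t) (ht1 : t ≤ 1) :
    (fun i : ℤ => if 0 ≤ i then t * ω₁ ^ i.toNat else t * ω₂ ^ i) ∈ MahavierTwo (FOmega Ω) ∧
    (∀ i : ℤ, 0 < (if 0 ≤ i then t * ω₁ ^ i.toNat else t * ω₂ ^ i) ∧
      (if 0 ≤ i then t * ω₁ ^ i.toNat else t * ω₂ ^ i) ≤ t) := by
  have hω₂0 : (0:ℝ) < ω₂ := lt_trans one_pos h3
  have hbound : ∀ i : ℤ, 0 < (if 0 ≤ i then t * ω₁ ^ i.toNat else t * ω₂ ^ i) ∧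
      (if 0 ≤ i then t * ω₁ ^ i.toNat else t * ω₂ ^ i) ≤ t := by
    intro i
    split_ifs with h
    · refine ⟨mul_pos ht0 (pow_pos h1 _), ?_⟩
      calc t * ω₁ ^ i.toNat ≤ t * 1 :=
            mul_le_mul_of_nonneg_left (pow_le_one₀ h1.le h2.le) ht0.le
        _ = t := by ring
    · refine ⟨mul_pos ht0 (zpow_pos hω₂0 _), ?_⟩
      calc t * ω₂ ^ i ≤ t * 1 :=
            mul_le_mul_of_nonneg_left (zpow_le_one_of_nonpos₀ h3.le (by omega)) ht0.le
        _ = t := by ring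
  refine ⟨?_, hbound⟩
  intro i
  have hIcc : ∀ j : ℤ, (if 0 ≤ j then t * ω₁ ^ j.toNat else t * ω₂ ^ j) ∈ Icc (0:ℝ) 1 :=
    fun j => ⟨(hbound j).1.le, le_trans (hbound j).2 ht1⟩
  refine ⟨hIcc i, hIcc (i+1), ?_⟩
  rcases le_or_gt 0 i with hi | hi
  · refine ⟨ω₁, hω₁, ?_⟩
    show (if 0 ≤ i + 1 then t * ω₁ ^ (i+1).toNat else _) = ω₁ * (if 0 ≤ i then t * ω₁ ^ i.toNat else _)
    rw [if_pos (by omega), if_pos hi, show (i+1).toNat = i.toNat + 1 by omega, pow_succ]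
    ring
  · refine ⟨ω₂, hω₂, ?_⟩
    show (if 0 ≤ i + 1 then t * ω₁ ^ (i+1).toNat else t * ω₂ ^ (i+1)) =
      ω₂ * (if 0 ≤ i then t * ω₁ ^ i.toNat else t * ω₂ ^ i)
    rw [if_neg (show ¬ (0:ℤ) ≤ i by omega)]
    have hz : t * ω₂ ^ (i+1) = ω₂ * (t * ω₂ ^ i) := by
      rw [zpow_add_one₀ (ne_of_gt hω₂0)]
      ring
    rcases lt_or_ge (i+1) 0 with h' | h'
    · rw [if_neg (show ¬ (0:ℤ) ≤ i + 1 by omega)]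
      exact hz
    · have hi1 : i + 1 = 0 := by omega
      rw [if_pos h', hi1]
      rw [hi1] at hz
      simpa using hz
end helpers2

lemma transPlusAux {Ω : Finset ℝ} (hΩ : LFInducing Ω) : TopTransitive (shiftPlus (FOmega Ω)) := by
  obtain ⟨-, hpos, ω₁, hω₁, ω₂, hω₂, h2, h3, hcon⟩ := hΩ
  have h1 : 0 < ω₁ := hpos _ hω₁
  have hratio : ∀ C : ℝ, 1 < C → ∃ a b : ℕ, 1 < ω₁ ^ a * ω₂ ^ b ∧ ω₁ ^ a * ω₂ ^ b < C :=
    exists_ratio h1 h2 h3 (fun L hL => small_step h1 h2 h3 hcon L hL)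
  intro U V hUo hVo hUne hVne
  obtain ⟨x, hxU⟩ := hUne
  obtain ⟨y, hyV⟩ := hVne
  obtain ⟨N₁, ε₁, hε₁, hU⟩ := open_ball_gen id hUo hxU
  obtain ⟨N₂, ε₂, hε₂, hV⟩ := open_ball_gen id hVo hyV
  set N := max N₁ N₂ with hN
  set δ := min (min ε₁ ε₂) 1 / 2 with hδdef
  have hmin0 : 0 < min (min ε₁ ε₂) 1 := lt_min (lt_min hε₁ hε₂) one_pos
  have hδ0 : 0 < δ := by rw [hδdef]; linarith
  have hδm : δ < min ε₁ ε₂ := by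
    rw [hδdef]
    have := min_le_left (min ε₁ ε₂) 1
    have := lt_min hε₁ hε₂
    linarith
  have hδε₁ : δ < ε₁ := lt_of_lt_of_le hδm (min_le_left _ _)
  have hδε₂ : δ < ε₂ := lt_of_lt_of_le hδm (min_le_right _ _)
  have hδ1 : δ < 1 := by
    rw [hδdef]
    have := min_le_right (min ε₁ ε₂) 1
    linarith
  rcases eq_or_lt_of_le (mem_Icc_plus y.2 0).1 with hy0 | hy0
  · -- y is the zero sequence (on all coordinates)
    have hyz : ∀ i, (y : ℕ → ℝ) i = 0 :=
      fun i => zero_fwd_plus hpos y.2 hy0.symm i (Nat.zero_le i)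
    have hxN := mem_Icc_plus x.2 N
    obtain ⟨K, hK⟩ := exists_pow_lt_of_lt_one hδ0 h2
    obtain ⟨z, hzmem, hz1, hz2⟩ := glue_plus x.2 N 0 (fun _ => (x : ℕ → ℝ) N) rfl
      (fun i hi => absurd hi (Nat.not_lt_zero i)) (pt_plus hω₁ h1 h2 hxN.1 hxN.2) (by simp)
    refine ⟨N + K, ⟨(shiftPlus (FOmega Ω))^[N+K] ⟨z, hzmem⟩,
      Set.mem_image_of_mem _ (hU ⟨z, hzmem⟩ ?_), hV _ ?_⟩⟩
    · intro i hi
      show |z i - (x : ℕ → ℝ) i| < ε₁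
      rw [hz1 i (le_trans hi (le_max_left _ _))]
      simpa using hε₁
    · intro i hi
      rw [shiftPlus_iterate]
      show |z (i + (N + K)) - (y : ℕ → ℝ) i| < ε₂
      have he : i + (N + K) = N + 0 + (K + i) := by omega
      rw [he, hz2 (K + i), hyz i, sub_zero]
      have hv0 : 0 ≤ (x : ℕ → ℝ) N * ω₁ ^ (K + i) :=
        mul_nonneg hxN.1 (pow_nonneg h1.le _)
      rw [abs_of_nonneg hv0]
      have hb : (x : ℕ → ℝ) N * ω₁ ^ (K + i) ≤ ω₁ ^ K := by
        calc (x : ℕ → ℝ) N * ω₁ ^ (K + i) ≤ 1 * ω₁ ^ (K + i) :=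
              mul_le_mul_of_nonneg_right hxN.2 (pow_nonneg h1.le _)
          _ = ω₁ ^ (K + i) := by ring
          _ ≤ ω₁ ^ K := pow_le_pow_of_le_one h1.le h2.le (by omega)
      linarith
  · -- y 0 > 0
    obtain ⟨x', hx'mem, hx'close, hx'N⟩ :
        ∃ x' : ℕ → ℝ, x' ∈ MahavierPlus (FOmega Ω) ∧
          (∀ i, i ≤ N → |x' i - (x : ℕ → ℝ) i| < min ε₁ ε₂) ∧ 0 < x' N := by
      rcases eq_or_lt_of_le (mem_Icc_plus x.2 N).1 with hxN | hxN
      · have hxz : ∀ i, i ≤ N → (x : ℕ → ℝ) i = 0 := zero_back_plus hpos x.2 hxN.symm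
        refine ⟨fun i => δ * ω₁ ^ i, pt_plus hω₁ h1 h2 hδ0.le (by linarith), ?_,
          mul_pos hδ0 (pow_pos h1 N)⟩
        intro i hi
        rw [hxz i hi, sub_zero, abs_of_nonneg (mul_nonneg hδ0.le (pow_nonneg h1.le i))]
        calc δ * ω₁ ^ i ≤ δ * 1 :=
              mul_le_mul_of_nonneg_left (pow_le_one₀ h1.le h2.le) hδ0.le
          _ = δ := by ring
          _ < min ε₁ ε₂ := hδm
      · exact ⟨(x : ℕ → ℝ), x.2, fun i _ => by simpa using lt_min hε₁ hε₂, hxN⟩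
    set Y := (y : ℕ → ℝ) 0 with hYdef
    have hY1 : Y ≤ 1 := (mem_Icc_plus y.2 0).2
    have hx'1 : x' N ≤ 1 := (mem_Icc_plus hx'mem N).2
    obtain ⟨t, htu, htv, hreach⟩ := reach_main hω₁ hω₂ h1 h2 h3 hratio hx'N hx'1
      (u := (1-δ)*Y) (v := Y) (by nlinarith) (by nlinarith) hY1
    obtain ⟨m, w, hw0, hwm, hsteps⟩ := reach_chain hreach
    set c := t / Y with hcdef
    have hc1 : c ≤ 1 := (div_le_one hy0).2 htv
    have hc0 : 0 < c := div_pos (lt_trans (by nlinarith) htu) hy0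
    have hclow : 1 - δ < c := by
      rw [hcdef, lt_div_iff₀ hy0]
      nlinarith
    have htail := scale_plus hc0.le hc1 y.2
    have hwm' : w m = (fun j => c * (y : ℕ → ℝ) j) 0 := by
      show w m = c * Y
      rw [hwm, hcdef, div_mul_cancel₀ t (ne_of_gt hy0)]
    obtain ⟨z, hzmem, hz1, hz2⟩ := glue_plus hx'mem N m w hw0 hsteps htail hwm'
    refine ⟨N + m, ⟨(shiftPlus (FOmega Ω))^[N+m] ⟨z, hzmem⟩,
      Set.mem_image_of_mem _ (hU ⟨z, hzmem⟩ ?_), hV _ ?_⟩⟩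
    · intro i hi
      show |z i - (x : ℕ → ℝ) i| < ε₁
      rw [hz1 i (le_trans hi (le_max_left _ _))]
      exact lt_of_lt_of_le (hx'close i (le_trans hi (le_max_left _ _))) (min_le_left _ _)
    · intro i hi
      rw [shiftPlus_iterate]
      show |z (i + (N + m)) - (y : ℕ → ℝ) i| < ε₂
      have he : i + (N + m) = N + m + i := by omega
      rw [he, hz2 i]
      have hyi := mem_Icc_plus y.2 i
      have habs : |c * (y : ℕ → ℝ) i - (y : ℕ → ℝ) i| = (1 - c) * (y : ℕ → ℝ) i := by
        rw [abs_of_nonpos (by nlinarith [hyi.1, hyi.2, hc1, hc0])]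
        ring
      rw [habs]
      nlinarith [hyi.1, hyi.2, hc1, hc0, hclow, hδε₂]

lemma transTwoAux {Ω : Finset ℝ} (hΩ : LFInducing Ω) : TopTransitive (shiftTwo (FOmega Ω)) := by
  obtain ⟨-, hpos, ω₁, hω₁, ω₂, hω₂, h2, h3, hcon⟩ := hΩ
  have h1 : 0 < ω₁ := hpos _ hω₁
  have hratio : ∀ C : ℝ, 1 < C → ∃ a b : ℕ, 1 < ω₁ ^ a * ω₂ ^ b ∧ ω₁ ^ a * ω₂ ^ b < C :=
    exists_ratio h1 h2 h3 (fun L hL => small_step h1 h2 h3 hcon L hL)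
  intro U V hUo hVo hUne hVne
  obtain ⟨x, hxU⟩ := hUne
  obtain ⟨y, hyV⟩ := hVne
  obtain ⟨N₁, ε₁, hε₁, hU⟩ := open_ball_gen Int.natAbs hUo hxU
  obtain ⟨N₂, ε₂, hε₂, hV⟩ := open_ball_gen Int.natAbs hVo hyV
  set N := max N₁ N₂ with hN
  set δ := min (min ε₁ ε₂) 1 / 2 with hδdef
  have hmin0 : 0 < min (min ε₁ ε₂) 1 := lt_min (lt_min hε₁ hε₂) one_pos
  have hδ0 : 0 < δ := by rw [hδdef]; linarith
  have hδm : δ < min ε₁ ε₂ := by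
    rw [hδdef]
    have := min_le_left (min ε₁ ε₂) 1
    have := lt_min hε₁ hε₂
    linarith
  have hδε₁ : δ < ε₁ := lt_of_lt_of_le hδm (min_le_left _ _)
  have hδε₂ : δ < ε₂ := lt_of_lt_of_le hδm (min_le_right _ _)
  have hδ1 : δ < 1 := by
    rw [hδdef]
    have := min_le_right (min ε₁ ε₂) 1
    linarith
  rcases eq_or_lt_of_le (mem_Icc_two y.2 (-(N:ℤ))).1 with hy0 | hy0
  · -- y vanishes on [-N, ∞)
    have hyz : ∀ i : ℤ, -(N:ℤ) ≤ i → (y : ℤ → ℝ) i = 0 :=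
      fun i hi => zero_fwd_two hpos y.2 hy0.symm i hi
    have hxN := mem_Icc_two x.2 (N:ℤ)
    obtain ⟨K, hK⟩ := exists_pow_lt_of_lt_one hδ0 h2
    have htail : ∀ i : ℤ, (N:ℤ) + ((0:ℕ):ℤ) ≤ i →
        ((fun i : ℤ => (x : ℤ → ℝ) (N:ℤ) * ω₁ ^ (i - (N:ℤ)).toNat) i,
         (fun i : ℤ => (x : ℤ → ℝ) (N:ℤ) * ω₁ ^ (i - (N:ℤ)).toNat) (i+1)) ∈ FOmega Ω := by
      intro i hi
      exact tail_pow_two hω₁ h1 h2 hxN.1 hxN.2 (N:ℤ) i (by omega)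
    obtain ⟨z, hzmem, hz1, hz2⟩ := glue_two x.2 N 0 (fun _ => (x : ℤ → ℝ) (N:ℤ)) rfl
      (fun i hi => absurd hi (Nat.not_lt_zero i)) htail (by simp)
    refine ⟨2*N + K, ⟨(shiftTwo (FOmega Ω))^[2*N+K] ⟨z, hzmem⟩,
      Set.mem_image_of_mem _ (hU ⟨z, hzmem⟩ ?_), hV _ ?_⟩⟩
    · intro i hi
      show |z i - (x : ℤ → ℝ) i| < ε₁
      rw [hz1 i (by omega)]
      simpa using hε₁
    · intro i hi
      rw [shiftTwo_iterate]
      show |z (i + ((2*N + K : ℕ):ℤ)) - (y : ℤ → ℝ) i| < ε₂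
      have hge : (N:ℤ) + ((0:ℕ):ℤ) ≤ i + ((2*N + K : ℕ):ℤ) := by push_cast; omega
      rw [hz2 _ hge, hyz i (by omega), sub_zero]
      have hv0 : 0 ≤ (x : ℤ → ℝ) (N:ℤ) * ω₁ ^ ((i + ((2*N + K : ℕ):ℤ)) - (N:ℤ)).toNat :=
        mul_nonneg hxN.1 (pow_nonneg h1.le _)
      rw [abs_of_nonneg hv0]
      have hb : (x : ℤ → ℝ) (N:ℤ) * ω₁ ^ ((i + ((2*N + K : ℕ):ℤ)) - (N:ℤ)).toNat ≤ ω₁ ^ K := by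
        calc (x : ℤ → ℝ) (N:ℤ) * ω₁ ^ ((i + ((2*N + K : ℕ):ℤ)) - (N:ℤ)).toNat
            ≤ 1 * ω₁ ^ ((i + ((2*N + K : ℕ):ℤ)) - (N:ℤ)).toNat :=
              mul_le_mul_of_nonneg_right hxN.2 (pow_nonneg h1.le _)
          _ = ω₁ ^ ((i + ((2*N + K : ℕ):ℤ)) - (N:ℤ)).toNat := by ring
          _ ≤ ω₁ ^ K := pow_le_pow_of_le_one h1.le h2.le (by omega)
      linarith
  · -- y (-N) > 0
    obtain ⟨x', hx'mem, hx'close, hx'N⟩ :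
        ∃ x' : ℤ → ℝ, x' ∈ MahavierTwo (FOmega Ω) ∧
          (∀ i : ℤ, i.natAbs ≤ N → |x' i - (x : ℤ → ℝ) i| < min ε₁ ε₂) ∧ 0 < x' (N:ℤ) := by
      rcases eq_or_lt_of_le (mem_Icc_two x.2 (N:ℤ)).1 with hxN | hxN
      · have hxz : ∀ i : ℤ, i ≤ (N:ℤ) → (x : ℤ → ℝ) i = 0 := zero_back_two hpos x.2 hxN.symm
        obtain ⟨hqmem, hqb⟩ := qt_two hω₁ hω₂ h1 h2 h3 hδ0 (by linarith : δ ≤ 1)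
        refine ⟨_, hqmem, ?_, ?_⟩
        · intro i hi
          rw [hxz i (by omega), sub_zero, abs_of_nonneg (hqb i).1.le]
          exact lt_of_le_of_lt (hqb i).2 hδm
        · exact (hqb (N:ℤ)).1
      · exact ⟨(x : ℤ → ℝ), x.2, fun i _ => by simpa using lt_min hε₁ hε₂, hxN⟩
    set Y := (y : ℤ → ℝ) (-(N:ℤ)) with hYdef
    have hY1 : Y ≤ 1 := (mem_Icc_two y.2 (-(N:ℤ))).2
    have hx'1 : x' (N:ℤ) ≤ 1 := (mem_Icc_two hx'mem (N:ℤ)).2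
    obtain ⟨t, htu, htv, hreach⟩ := reach_main hω₁ hω₂ h1 h2 h3 hratio hx'N hx'1
      (u := (1-δ)*Y) (v := Y) (by nlinarith) (by nlinarith) hY1
    obtain ⟨m, w, hw0, hwm, hsteps⟩ := reach_chain hreach
    set c := t / Y with hcdef
    have hc1 : c ≤ 1 := (div_le_one hy0).2 htv
    have hc0 : 0 < c := div_pos (lt_trans (by nlinarith) htu) hy0
    have hclow : 1 - δ < c := by
      rw [hcdef, lt_div_iff₀ hy0]
      nlinarith
    set n : ℕ := 2*N + m with hndef
    have htailmem := scale_shift_two hc0.le hc1 y.2 (n : ℤ)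
    have hwm' : w m = (fun i : ℤ => c * (y : ℤ → ℝ) (i - (n:ℤ))) ((N:ℤ) + (m:ℕ)) := by
      show w m = c * (y : ℤ → ℝ) ((N:ℤ) + (m:ℤ) - (n:ℤ))
      rw [show ((N:ℤ) + (m:ℤ) - (n:ℤ)) = -(N:ℤ) by rw [hndef]; push_cast; ring]
      rw [hwm, hcdef, div_mul_cancel₀ t (ne_of_gt hy0)]
    obtain ⟨z, hzmem, hz1, hz2⟩ := glue_two hx'mem N m w hw0 hsteps
      (fun i _ => htailmem i) hwm'
    refine ⟨n, ⟨(shiftTwo (FOmega Ω))^[n] ⟨z, hzmem⟩,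
      Set.mem_image_of_mem _ (hU ⟨z, hzmem⟩ ?_), hV _ ?_⟩⟩
    · intro i hi
      show |z i - (x : ℤ → ℝ) i| < ε₁
      rw [hz1 i (by omega)]
      exact lt_of_lt_of_le (hx'close i (by omega)) (min_le_left _ _)
    · intro i hi
      rw [shiftTwo_iterate]
      show |z (i + ((n:ℕ):ℤ)) - (y : ℤ → ℝ) i| < ε₂
      have hge : (N:ℤ) + (m:ℤ) ≤ i + ((n:ℕ):ℤ) := by rw [hndef]; push_cast; omega
      rw [hz2 _ hge]
      show |c * (y : ℤ → ℝ) (i + ((n:ℕ):ℤ) - (n:ℤ)) - (y : ℤ → ℝ) i| < ε₂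
      rw [show i + ((n:ℕ):ℤ) - (n:ℤ) = i by ring]
      have hyi := mem_Icc_two y.2 i
      have habs : |c * (y : ℤ → ℝ) i - (y : ℤ → ℝ) i| = (1 - c) * (y : ℤ → ℝ) i := by
        rw [abs_of_nonpos (by nlinarith [hyi.1, hyi.2, hc1, hc0])]
        ring
      rw [habs]
      nlinarith [hyi.1, hyi.2, hc1, hc0, hclow, hδε₂]

/-- For every LF-inducing set `Ω`, both the two-sided and the one-sided
Mahavier dynamical systems of `F_Ω` are topologically transitive. -/
theorem stmt17 (Ω : Finset ℝ) (hΩ : LFInducing Ω) :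
    TopTransitive (shiftTwo (FOmega Ω)) ∧ TopTransitive (shiftPlus (FOmega Ω)) := by
  exact ⟨transTwoAux hΩ, transPlusAux hΩ⟩
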